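/- Let (X,d) be a metric space whose underlying set X is finite and nonempty. If the basic geodesic graph of (X,d) is a tree (connected and acyclic), then (X,d) satisfies the fourth-point condition. -/

import Mathlib

/-- A chain of intermediate points witnessing that the pair `{x, x'}` is non-basic:
`k ≥ 1` pairwise distinct intermediate points, each different from `x` and `x'`,
along which the distances sum to `dist x x'`. -/
def IsNonBasicChain {X : Type*} [MetricSpace X] (x x' : X) : Prop :=
  ∃ (k : ℕ) (p : Fin (k + 2) → X), 1 ≤ k ∧ Function.Injective p ∧
    p 0 = x ∧ p (Fin.last (k + 1)) = x' ∧
    dist x x' = ∑ i : Fin (k + 1), dist (p i.castSucc) (p i.succ)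

/-- The unordered pair `{x, x'}` is a non-basic edge. -/
def IsNonBasicEdge {X : Type*} [MetricSpace X] (x x' : X) : Prop :=
  IsNonBasicChain x x' ∨ IsNonBasicChain x' x

/-- The unordered pair `{x, x'}` is a basic edge. -/
def IsBasicEdge {X : Type*} [MetricSpace X] (x x' : X) : Prop :=
  x ≠ x' ∧ ¬ IsNonBasicEdge x x'

/-- The basic geodesic graph: the simple graph on `X` whose edges are the basic edges. -/
def basicGeodesicGraph (X : Type*) [MetricSpace X] : SimpleGraph X where
  Adj x y := IsBasicEdge x y
  symm := ⟨fun x y ⟨h1, h2⟩ => ⟨h1.symm, fun h => h2 h.symm⟩⟩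
  loopless := ⟨fun x ⟨h1, _⟩ => h1 rfl⟩

/-- The fourth-point condition. -/
def FourthPointCondition (X : Type*) [MetricSpace X] : Prop :=
  ∀ x y z : X, ∃ p : X,
    dist x p + dist y p + dist z p = (dist x y + dist y z + dist z x) / 2

namespace FourthPointAux

open SimpleGraph (Walk)

variable {X : Type*} [MetricSpace X]

/-- The weight of a walk: the sum of the distances along its darts. -/
noncomputable def wt {G : SimpleGraph X} {x y : X} (p : G.Walk x y) : ℝ :=
  (p.darts.map fun d => dist d.toProd.1 d.toProd.2).sum

lemma wt_nil {G : SimpleGraph X} {x : X} : wt (SimpleGraph.Walk.nil : G.Walk x x) = 0 := by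
  simp [wt]

lemma wt_cons {G : SimpleGraph X} {x y z : X} (h : G.Adj x y) (p : G.Walk y z) :
    wt (SimpleGraph.Walk.cons h p) = dist x y + wt p := by
  simp [wt, Walk.darts_cons]

lemma wt_append {G : SimpleGraph X} {x y z : X} (p : G.Walk x y) (q : G.Walk y z) :
    wt (p.append q) = wt p + wt q := by
  simp [wt, Walk.darts_append]

lemma wt_nonneg {G : SimpleGraph X} {x y : X} (p : G.Walk x y) : 0 ≤ wt p := by
  apply List.sum_nonneg
  intro a ha
  simp only [List.mem_map] at ha
  obtain ⟨d, _, rfl⟩ := ha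
  exact dist_nonneg

lemma dist_le_wt {G : SimpleGraph X} {x y : X} (p : G.Walk x y) : dist x y ≤ wt p := by
  induction p with
  | nil => simp [wt_nil]
  | @cons u v w h q ih =>
    rw [wt_cons]
    calc dist u w ≤ dist u v + dist v w := dist_triangle u v w
      _ ≤ dist u v + wt q := by linarith

lemma list_sum_le {α : Type*} (f : α → ℝ) (hf : ∀ a, 0 ≤ f a) :
    ∀ (l₁ l₂ : List α), l₁.Nodup → l₁ ⊆ l₂ → (l₁.map f).sum ≤ (l₂.map f).sum := by
  classical
  intro l₁
  induction l₁ with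
  | nil =>
    intro l₂ _ _
    simp only [List.map_nil, List.sum_nil]
    apply List.sum_nonneg
    intro a ha
    simp only [List.mem_map] at ha
    obtain ⟨d, _, rfl⟩ := ha
    exact hf d
  | cons a t ih =>
    intro l₂ hnd hsub
    have ha : a ∈ l₂ := hsub List.mem_cons_self
    have hperm : List.Perm (l₂.map f) ((a :: l₂.erase a).map f) := ((List.perm_cons_erase ha).map f)
    rw [hperm.sum_eq, List.map_cons, List.sum_cons, List.map_cons, List.sum_cons]
    have hsub' : t ⊆ l₂.erase a := by
      intro b hb
      have hbne : b ≠ a := by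
        rintro rfl
        exact (List.nodup_cons.1 hnd).1 hb
      exact (List.mem_erase_of_ne hbne).2 (hsub (List.mem_cons_of_mem _ hb))
    exact add_le_add_right (ih _ (List.nodup_cons.1 hnd).2 hsub') _

lemma wt_bypass_le {G : SimpleGraph X} [DecidableEq X] {x y : X} (p : G.Walk x y) :
    wt p.bypass ≤ wt p := by
  apply list_sum_le _ (fun d => dist_nonneg)
  · exact Walk.darts_nodup_of_support_nodup p.bypass_isPath.support_nodup
  · exact p.darts_bypass_subset

lemma wt_reverse {G : SimpleGraph X} {x y : X} (p : G.Walk x y) : wt p.reverse = wt p := by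
  unfold wt
  rw [Walk.darts_reverse, List.map_reverse, List.sum_reverse, List.map_map]
  have he : ((fun d : G.Dart => dist d.toProd.1 d.toProd.2) ∘ SimpleGraph.Dart.symm)
      = fun d : G.Dart => dist d.toProd.1 d.toProd.2 := by
    funext d
    simp [SimpleGraph.Dart.symm, dist_comm]
  rw [he]

/-- The unique path between two vertices of a tree. -/
noncomputable def tp {G : SimpleGraph X} (h : G.IsTree) (x y : X) : G.Walk x y :=
  (h.existsUnique_path x y).exists.choose

lemma tp_isPath {G : SimpleGraph X} (h : G.IsTree) (x y : X) : (tp h x y).IsPath :=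
  (h.existsUnique_path x y).exists.choose_spec

lemma tp_unique {G : SimpleGraph X} (h : G.IsTree) {x y : X} {p : G.Walk x y}
    (hp : p.IsPath) : p = tp h x y := by
  obtain ⟨q, hq, huniq⟩ := h.existsUnique_path x y
  rw [huniq p hp, huniq _ (tp_isPath h x y)]

/-- Tree distance: weight of the unique path. -/
noncomputable def dT {G : SimpleGraph X} (h : G.IsTree) (x y : X) : ℝ := wt (tp h x y)

lemma dT_self {G : SimpleGraph X} (h : G.IsTree) (x : X) : dT h x x = 0 := by
  rw [dT, ← tp_unique h (Walk.IsPath.nil (u := x)), wt_nil]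

lemma dist_le_dT {G : SimpleGraph X} (h : G.IsTree) (x y : X) : dist x y ≤ dT h x y :=
  dist_le_wt _

lemma dT_comm {G : SimpleGraph X} (h : G.IsTree) (x y : X) : dT h x y = dT h y x := by
  rw [dT, dT, ← tp_unique h ((tp_isPath h x y).reverse), wt_reverse]

lemma dT_triangle {G : SimpleGraph X} (h : G.IsTree) (x y z : X) :
    dT h x z ≤ dT h x y + dT h y z := by
  classical
  have hb : ((tp h x y).append (tp h y z)).bypass = tp h x z :=
    tp_unique h (Walk.bypass_isPath _)
  calc dT h x z = wt ((tp h x y).append (tp h y z)).bypass := by rw [hb, dT]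
    _ ≤ wt ((tp h x y).append (tp h y z)) := wt_bypass_le _
    _ = dT h x y + dT h y z := wt_append _ _

lemma dT_adj {G : SimpleGraph X} (h : G.IsTree) {x y : X} (hxy : G.Adj x y) :
    dT h x y = dist x y := by
  have hpath : (Walk.cons hxy Walk.nil : G.Walk x y).IsPath := by
    rw [Walk.cons_isPath_iff]
    exact ⟨Walk.IsPath.nil, by simp [hxy.ne]⟩
  rw [dT, ← tp_unique h hpath, wt_cons, wt_nil, add_zero]

lemma dT_split {G : SimpleGraph X} (h : G.IsTree) {x z : X} (y : X)
    (hy : y ∈ (tp h x z).support) : dT h x z = dT h x y + dT h y z := by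
  classical
  have h1 : ((tp h x z).takeUntil y hy) = tp h x y :=
    tp_unique h ((tp_isPath h x z).takeUntil hy)
  have h2 : ((tp h x z).dropUntil y hy) = tp h y z :=
    tp_unique h ((tp_isPath h x z).dropUntil hy)
  have h3 := (tp h x z).take_spec hy
  calc dT h x z = wt (((tp h x z).takeUntil y hy).append ((tp h x z).dropUntil y hy)) := by
        rw [h3, dT]
    _ = dT h x y + dT h y z := by rw [wt_append, h1, h2, dT, dT]

lemma dT_chain {G : SimpleGraph X} (h : G.IsTree) :
    ∀ (m : ℕ) (f : Fin (m + 2) → X),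
      dT h (f 0) (f (Fin.last (m + 1))) ≤ ∑ i : Fin (m + 1), dT h (f i.castSucc) (f i.succ) := by
  intro m
  induction m with
  | zero =>
    intro f
    rw [Fin.sum_univ_one]
    exact le_of_eq rfl
  | succ m ih =>
    intro f
    rw [Fin.sum_univ_castSucc]
    have h1 := ih (fun i => f i.castSucc)
    have trig := dT_triangle h (f 0) (f ((Fin.last (m + 1)).castSucc)) (f (Fin.last (m + 2)))
    have hlast : (Fin.last (m + 1)).succ = Fin.last (m + 2) := Fin.succ_last (m + 1)
    have hzero : ((0 : Fin (m + 2)).castSucc) = (0 : Fin (m + 3)) := by simp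
    calc dT h (f 0) (f (Fin.last (m + 2)))
        ≤ dT h (f 0) (f ((Fin.last (m + 1)).castSucc))
          + dT h (f ((Fin.last (m + 1)).castSucc)) (f (Fin.last (m + 2))) := trig
      _ ≤ (∑ i : Fin (m + 1), dT h (f i.castSucc.castSucc) (f i.succ.castSucc))
          + dT h (f (Fin.last (m + 1)).castSucc) (f (Fin.last (m + 1)).succ) := by
          rw [hlast]
          apply add_le_add_left
          rw [← hzero]
          exact h1
      _ = _ := rfl

open Classical in
/-- Measure used for strong induction: the number of ordered pairs at strictly
smaller distance. -/
noncomputable def msr {X : Type*} [MetricSpace X] [Fintype X] (x y : X) : ℕ :=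
  (Finset.univ.filter fun q : X × X => dist q.1 q.2 < dist x y).card

open Classical in
lemma msr_lt {X : Type*} [MetricSpace X] [Fintype X] {a b x y : X}
    (hab : dist a b < dist x y) : msr a b < msr x y := by
  apply Finset.card_lt_card
  rw [Finset.ssubset_iff_of_subset]
  · refine ⟨(a, b), ?_, ?_⟩
    · simp [hab]
    · simp
  · intro q hq
    simp only [Finset.mem_filter, Finset.mem_univ, true_and] at hq ⊢
    exact hq.trans hab

variable [Fintype X]

lemma chain_case (h : (basicGeodesicGraph X).IsTree) (a b : X) (hc : IsNonBasicChain a b)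
    (IH : ∀ c d : X, dist c d < dist a b → dist c d = dT h c d) :
    dist a b = dT h a b := by
  obtain ⟨k, p, hk, hinj, h0, hl, hsum⟩ := hc
  have hpos : ∀ i : Fin (k + 1), 0 < dist (p i.castSucc) (p i.succ) := by
    intro i
    rw [dist_pos]
    intro he
    exact absurd (hinj he) (Fin.castSucc_lt_succ : i.castSucc < i.succ).ne
  have hlt : ∀ i : Fin (k + 1), dist (p i.castSucc) (p i.succ) < dist a b := by
    intro i
    obtain ⟨j, hj⟩ : ∃ j : Fin (k + 1), j ≠ i :=
      Fintype.exists_ne_of_one_lt_card (by simp; omega) i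
    have hs := Finset.add_sum_erase Finset.univ
      (fun i : Fin (k + 1) => dist (p i.castSucc) (p i.succ)) (Finset.mem_univ i)
    have h2 : dist (p j.castSucc) (p j.succ)
        ≤ ∑ x ∈ Finset.univ.erase i, dist (p x.castSucc) (p x.succ) :=
      Finset.single_le_sum (f := fun i : Fin (k + 1) => dist (p i.castSucc) (p i.succ))
        (fun _ _ => dist_nonneg) (Finset.mem_erase.2 ⟨hj, Finset.mem_univ j⟩)
    have hpj := hpos j
    rw [hsum, ← hs]
    linarith
  have hsum' : dist a b = ∑ i : Fin (k + 1), dT h (p i.castSucc) (p i.succ) :=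
    hsum.trans (Finset.sum_congr rfl fun i _ => IH _ _ (hlt i))
  have hchain := dT_chain h k p
  rw [h0, hl] at hchain
  have hd := dist_le_dT h a b
  linarith

lemma dist_eq_dT (h : (basicGeodesicGraph X).IsTree) (x y : X) : dist x y = dT h x y := by
  suffices H : ∀ (n : ℕ) (x y : X), msr x y = n → dist x y = dT h x y from
    H (msr x y) x y rfl
  intro n
  induction n using Nat.strong_induction_on with
  | _ n ih =>
    intro x y hn
    by_cases hxy : x = y
    · subst hxy; rw [dist_self, dT_self]
    by_cases hnb : IsNonBasicEdge x y
    · have IH : ∀ c d : X, dist c d < dist x y → dist c d = dT h c d := by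
        intro c d hcd
        exact ih (msr c d) (hn ▸ msr_lt hcd) c d rfl
      rcases hnb with hc | hc
      · exact chain_case h x y hc IH
      · have hIH' : ∀ c d : X, dist c d < dist y x → dist c d = dT h c d := by
          intro c d hcd
          exact IH c d (by rwa [dist_comm y x] at hcd)
        have := chain_case h y x hc hIH'
        rw [dist_comm, this, dT_comm]
    · have hadj : (basicGeodesicGraph X).Adj x y := show IsBasicEdge x y from ⟨hxy, hnb⟩
      exact (dT_adj h hadj).symm

lemma median (h : (basicGeodesicGraph X).IsTree) :
    ∀ (n : ℕ) (y z : X), (tp h y z).length = n → ∀ x : X,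
      ∃ p : X, dist x p + dist y p + dist z p = (dist x y + dist y z + dist z x) / 2 := by
  classical
  intro n
  induction n with
  | zero =>
    intro y z hlen x
    have hyz : y = z := Walk.eq_of_length_eq_zero hlen
    subst hyz
    refine ⟨y, ?_⟩
    rw [dist_self, dist_comm y x]
    ring
  | succ n ih =>
    intro y z hlen x
    have hne : y ≠ z := by
      rintro rfl
      rw [(Walk.isPath_iff_eq_nil).1 (tp_isPath h y y)] at hlen
      simp at hlen
    obtain ⟨y₁, hadj, rest, hw⟩ := Walk.exists_eq_cons_of_ne hne (tp h y z)
    have hpath := tp_isPath h y z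
    rw [hw, Walk.cons_isPath_iff] at hpath
    obtain ⟨hrestpath, hynotin⟩ := hpath
    have hrest : rest = tp h y₁ z := tp_unique h hrestpath
    have hrestlen : (tp h y₁ z).length = n := by
      rw [← hrest]
      have := hw ▸ hlen
      simpa [Walk.length_cons] using this
    have hdyz : dist y z = dist y y₁ + dist y₁ z := by
      have : dT h y z = dist y y₁ + dT h y₁ z := by
        rw [dT, hw, wt_cons, hrest, dT]
      rw [dist_eq_dT h y z, dist_eq_dT h y₁ z, this]
    by_cases hy : y ∈ (tp h x y₁).support
    · -- Case B: `y` lies between `x` and `y₁`, hence between `x` and `z`.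
      have hyxz : y ∈ (tp h x z).support := by
        by_contra hyxz
        have hWb : ((tp h x z).append rest.reverse).bypass = tp h x y₁ :=
          tp_unique h (Walk.bypass_isPath _)
        have hmem : y ∈ ((tp h x z).append rest.reverse).support :=
          Walk.support_bypass_subset _ (hWb ▸ hy)
        rw [Walk.mem_support_append_iff] at hmem
        rcases hmem with hmem | hmem
        · exact hyxz hmem
        · rw [Walk.support_reverse, List.mem_reverse] at hmem
          exact hynotin hmem
      have hsplit : dist x z = dist x y + dist y z := by
        have := dT_split h y hyxz
        rw [dist_eq_dT h x z, dist_eq_dT h x y, dist_eq_dT h y z, this]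
      refine ⟨y, ?_⟩
      rw [dist_self, dist_comm z y, dist_comm z x, hsplit]
      ring
    · -- Case A: `dist x y = dist x y₁ + dist y₁ y`.
      have hq : ((tp h x y₁).append (Walk.cons hadj.symm Walk.nil)).IsPath := by
        apply Walk.IsPath.mk'
        rw [Walk.support_append]
        simp only [Walk.support_cons, Walk.support_nil, List.tail_cons]
        rw [List.nodup_append]
        refine ⟨(tp_isPath h x y₁).support_nodup, List.nodup_singleton y, ?_⟩
        intro a ha b hay hab
        rw [List.mem_singleton] at hay
        subst hay
        subst hab
        exact hy ha
      have hdxy : dist x y = dist x y₁ + dist y y₁ := by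
        have : dT h x y = dT h x y₁ + dist y₁ y := by
          rw [dT, ← tp_unique h hq, wt_append, wt_cons, wt_nil, add_zero, dT]
        rw [dist_eq_dT h x y, dist_eq_dT h x y₁, this, dist_comm y y₁]
      obtain ⟨p, hp⟩ := ih y₁ z hrestlen x
      have t1 : dist x y₁ ≤ dist x p + dist y₁ p := by
        have := dist_triangle x p y₁
        rw [dist_comm p y₁] at this
        exact this
      have t2 : dist y₁ z ≤ dist y₁ p + dist z p := by
        have := dist_triangle y₁ p z
        rw [dist_comm p z] at this
        exact this
      have t3 : dist z x ≤ dist z p + dist x p := by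
        have := dist_triangle z p x
        rw [dist_comm p x] at this
        exact this
      have hb0 : dist y₁ p + dist z p = dist y₁ z := by linarith
      have hyp : dist y p = dist y y₁ + dist y₁ p := by
        have u1 : dist y p ≤ dist y y₁ + dist y₁ p := dist_triangle y y₁ p
        have u2 : dist y z ≤ dist y p + dist z p := by
          have := dist_triangle y p z
          rw [dist_comm p z] at this
          exact this
        linarith
      refine ⟨p, ?_⟩
      rw [hdxy, hdyz, hyp]
      linarith

end FourthPointAux

/-- If the basic geodesic graph of a finite metric space is a tree, then the metric
space satisfies the fourth-point condition. -/
theorem fourthPointCondition_of_basicGeodesicGraph_isTree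
    {X : Type*} [MetricSpace X] [Fintype X] [Nonempty X]
    (h : (basicGeodesicGraph X).IsTree) :
    FourthPointCondition X := by
  intro x y z
  exact FourthPointAux.median h (FourthPointAux.tp h y z).length y z rfl x
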